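/- Let $\mathcal N$ denote the standard normal CDF, $c_1 > 0$, $\lambda > 0$ with $c_1^2 = 2\lambda$, and $t < T$. Then $\lambda e^{\lambda t}\int_t^T \mathcal N(c_1\sqrt{T-u}) e^{-\lambda u}\, du = \mathcal N(c_1\sqrt{T-t}) - e^{-\lambda(T-t)}\Big(\frac 12 + \frac{c_1\sqrt{T-t}}{\sqrt{2\pi}}\Big).$ -/

import Mathlib

open MeasureTheory Real Set

/-- The standard normal cumulative distribution function. -/
noncomputable def stdNormalCDF (x : ℝ) : ℝ :=
  ∫ z in Set.Iic x, Real.exp (-z ^ 2 / 2) / Real.sqrt (2 * Real.pi)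

lemma gauss_integrable :
    Integrable (fun z : ℝ => Real.exp (-z ^ 2 / 2) / Real.sqrt (2 * Real.pi)) := by
  have h : Integrable (fun z : ℝ => Real.exp (-(1/2 : ℝ) * z ^ 2)) :=
    integrable_exp_neg_mul_sq (by norm_num)
  have := h.div_const (Real.sqrt (2 * Real.pi))
  convert this using 2 with z
  ring_nf

lemma gauss_continuous :
    Continuous (fun z : ℝ => Real.exp (-z ^ 2 / 2) / Real.sqrt (2 * Real.pi)) := by
  fun_prop

lemma gauss_total : (∫ z : ℝ, Real.exp (-z ^ 2 / 2) / Real.sqrt (2 * Real.pi)) = 1 := by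
  have h : (∫ z : ℝ, Real.exp (-(1/2 : ℝ) * z ^ 2)) = Real.sqrt (Real.pi / (1/2)) :=
    integral_gaussian (1/2)
  have h2 : (∫ z : ℝ, Real.exp (-z ^ 2 / 2) / Real.sqrt (2 * Real.pi))
      = (∫ z : ℝ, Real.exp (-(1/2 : ℝ) * z ^ 2)) / Real.sqrt (2 * Real.pi) := by
    rw [← integral_div]
    congr 1 with z
    ring_nf
  rw [h2, h]
  rw [show Real.pi / (1/2) = 2 * Real.pi by ring]
  have : Real.sqrt (2 * Real.pi) ≠ 0 := by positivity
  field_simp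

lemma stdNormalCDF_zero : stdNormalCDF 0 = 1 / 2 := by
  set g : ℝ → ℝ := fun z => Real.exp (-z ^ 2 / 2) / Real.sqrt (2 * Real.pi) with hg
  have heven : ∀ x : ℝ, g (-x) = g x := by
    intro x; simp [hg, neg_pow]
  have h1 : (∫ z in Iic (0 : ℝ), g z) = ∫ z in Ioi (0 : ℝ), g z := by
    calc (∫ z in Iic (0 : ℝ), g z) = ∫ z in Iic (0 : ℝ), g (-z) := by
          simp_rw [heven]
      _ = ∫ z in Ioi (-(0 : ℝ)), g z := integral_comp_neg_Iic 0 g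
      _ = ∫ z in Ioi (0 : ℝ), g z := by norm_num
  have h2 : (∫ z in Iic (0 : ℝ), g z) + (∫ z in Ioi (0 : ℝ), g z) = ∫ z : ℝ, g z :=
    intervalIntegral.integral_Iic_add_Ioi gauss_integrable.integrableOn gauss_integrable.integrableOn
  have h3 : (∫ z : ℝ, g z) = 1 := gauss_total
  have : (∫ z in Iic (0 : ℝ), g z) + (∫ z in Iic (0 : ℝ), g z) = 1 := by
    rw [h3] at h2; rw [h1] at *; linarith [h2]
  have : (2 : ℝ) * ∫ z in Iic (0 : ℝ), g z = 1 := by linarith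
  unfold stdNormalCDF
  linarith

lemma hasDerivAt_stdNormalCDF (x : ℝ) :
    HasDerivAt stdNormalCDF (Real.exp (-x ^ 2 / 2) / Real.sqrt (2 * Real.pi)) x := by
  set g : ℝ → ℝ := fun z => Real.exp (-z ^ 2 / 2) / Real.sqrt (2 * Real.pi) with hg
  have hrepr : ∀ y : ℝ, stdNormalCDF y = (∫ z in (0 : ℝ)..y, g z) + stdNormalCDF 0 := by
    intro y
    have := intervalIntegral.integral_Iic_sub_Iic (μ := volume) (f := g)
      gauss_integrable.integrableOn gauss_integrable.integrableOn (a := 0) (b := y)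
    unfold stdNormalCDF
    rw [← this]; ring
  have hD : HasDerivAt (fun y => (∫ z in (0 : ℝ)..y, g z) + stdNormalCDF 0) (g x) x := by
    refine (?_ : HasDerivAt (fun y => ∫ z in (0 : ℝ)..y, g z) (g x) x).add_const _
    exact intervalIntegral.integral_hasDerivAt_right
      (gauss_integrable.intervalIntegrable)
      (gauss_continuous.stronglyMeasurable.stronglyMeasurableAtFilter)
      gauss_continuous.continuousAt
  have : HasDerivAt stdNormalCDF (g x) x := by
    apply hD.congr_of_eventuallyEq
    filter_upwards with y using (hrepr y)
  exact this

lemma continuous_stdNormalCDF : Continuous stdNormalCDF :=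
  continuous_iff_continuousAt.2 fun x => (hasDerivAt_stdNormalCDF x).continuousAt

/-- Explicit value of `A₁(t,T)` in the degenerate case `c₁² = 2λ`. -/
theorem A1_case_eq (c₁ l t T : ℝ) (hc₁ : 0 < c₁) (hl : 0 < l)
    (hcase : c₁ ^ 2 = 2 * l) (htT : t < T) :
    l * Real.exp (l * t) *
        ∫ u in t..T, stdNormalCDF (c₁ * Real.sqrt (T - u)) * Real.exp (-l * u)
      = stdNormalCDF (c₁ * Real.sqrt (T - t))
        - Real.exp (-l * (T - t)) * (1 / 2 + c₁ * Real.sqrt (T - t) / Real.sqrt (2 * Real.pi)) := by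
  have hsp : (0 : ℝ) < Real.sqrt (2 * Real.pi) := by positivity
  set F : ℝ → ℝ := fun u => Real.exp (-l * u) * stdNormalCDF (c₁ * Real.sqrt (T - u))
      - c₁ * Real.exp (-l * T) * Real.sqrt (T - u) / Real.sqrt (2 * Real.pi) with hF
  have hderiv : ∀ u ∈ Ioo t T, HasDerivAt F
      (-(l * (stdNormalCDF (c₁ * Real.sqrt (T - u)) * Real.exp (-l * u)))) u := by
    intro u hu
    have hT : (0 : ℝ) < T - u := by linarith [hu.2]
    set s := Real.sqrt (T - u) with hs
    have hspos : 0 < s := Real.sqrt_pos.2 hT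
    have h1 : HasDerivAt (fun v : ℝ => T - v) (-1) u := by
      simpa using (hasDerivAt_id u).const_sub T
    have h2 : HasDerivAt (fun v : ℝ => Real.sqrt (T - v)) (1 / (2 * s) * (-1)) u :=
      (Real.hasDerivAt_sqrt (ne_of_gt hT)).comp u h1
    have h3 : HasDerivAt (fun v : ℝ => c₁ * Real.sqrt (T - v)) (c₁ * (1 / (2 * s) * (-1))) u :=
      h2.const_mul c₁
    have h4 : HasDerivAt (fun v : ℝ => stdNormalCDF (c₁ * Real.sqrt (T - v)))
        ((Real.exp (-(c₁ * s) ^ 2 / 2) / Real.sqrt (2 * Real.pi)) * (c₁ * (1 / (2 * s) * (-1)))) u :=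
      (hasDerivAt_stdNormalCDF (c₁ * s)).comp (h := fun v : ℝ => c₁ * Real.sqrt (T - v)) u h3
    have h5 : HasDerivAt (fun v : ℝ => Real.exp (-l * v)) (Real.exp (-l * u) * -l) u := by
      have : HasDerivAt (fun v : ℝ => -l * v) (-l) u := by
        simpa using (hasDerivAt_id u).const_mul (-l)
      exact this.exp
    have h6 := h5.mul h4
    have h7 : HasDerivAt
        (fun v : ℝ => c₁ * Real.exp (-l * T) * Real.sqrt (T - v) / Real.sqrt (2 * Real.pi))
        (c₁ * Real.exp (-l * T) * (1 / (2 * s) * (-1)) / Real.sqrt (2 * Real.pi)) u := by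
      simpa [mul_div_assoc, mul_comm, mul_left_comm] using
        ((h2.const_mul (c₁ * Real.exp (-l * T))).div_const (Real.sqrt (2 * Real.pi)))
    have hkey : Real.exp (-l * u) * (Real.exp (-(c₁ * s) ^ 2 / 2) / Real.sqrt (2 * Real.pi))
        = Real.exp (-l * T) / Real.sqrt (2 * Real.pi) := by
      have hsq : (c₁ * s) ^ 2 = 2 * l * (T - u) := by
        rw [mul_pow, hs, Real.sq_sqrt hT.le, hcase]
      rw [hsq, ← mul_div_assoc, ← Real.exp_add]
      congr 2
      ring
    have := h6.sub h7
    refine this.congr_deriv ?_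
    linear_combination (c₁ * (1 / (2 * s) * (-1))) * hkey
  have hcontN : Continuous fun u : ℝ => stdNormalCDF (c₁ * Real.sqrt (T - u)) :=
    continuous_stdNormalCDF.comp (by fun_prop)
  have hcont : ContinuousOn F (Icc t T) := by
    apply Continuous.continuousOn
    exact ((by fun_prop : Continuous fun u : ℝ => Real.exp (-l * u)).mul hcontN).sub (by fun_prop)
  have hint : IntervalIntegrable
      (fun u => -(l * (stdNormalCDF (c₁ * Real.sqrt (T - u)) * Real.exp (-l * u)))) volume t T :=
    ((continuous_const.mul (hcontN.mul
      (by fun_prop : Continuous fun u : ℝ => Real.exp (-l * u)))).neg).intervalIntegrable t T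
  have hFTC := intervalIntegral.integral_eq_sub_of_hasDerivAt_of_le htT.le hcont hderiv hint
  have hI : ∫ u in t..T, stdNormalCDF (c₁ * Real.sqrt (T - u)) * Real.exp (-l * u)
      = (F t - F T) / l := by
    have h1 : ∫ u in t..T, -(l * (stdNormalCDF (c₁ * Real.sqrt (T - u)) * Real.exp (-l * u)))
        = -(l * ∫ u in t..T, stdNormalCDF (c₁ * Real.sqrt (T - u)) * Real.exp (-l * u)) := by
      rw [intervalIntegral.integral_neg, intervalIntegral.integral_const_mul]
    rw [h1] at hFTC
    rw [eq_div_iff hl.ne']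
    linear_combination (-1) * hFTC
  rw [hI]
  have hFt : F t = Real.exp (-l * t) * stdNormalCDF (c₁ * Real.sqrt (T - t))
      - c₁ * Real.exp (-l * T) * Real.sqrt (T - t) / Real.sqrt (2 * Real.pi) := rfl
  have hFT : F T = Real.exp (-l * T) * (1 / 2) := by
    simp [hF, stdNormalCDF_zero]
  rw [hFt, hFT]
  have he1 : Real.exp (l * t) * Real.exp (-l * t) = 1 := by
    rw [← Real.exp_add, show l * t + -l * t = 0 by ring, Real.exp_zero]
  have he2 : Real.exp (l * t) * Real.exp (-l * T) = Real.exp (-l * (T - t)) := by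
    rw [← Real.exp_add]; congr 1; ring
  have hred : ∀ A B : ℝ, l * Real.exp (l * t) * ((A - B) / l)
      = Real.exp (l * t) * (A - B) := by
    intro A B; field_simp
  rw [hred]
  linear_combination stdNormalCDF (c₁ * Real.sqrt (T - t)) * he1
    - (c₁ * Real.sqrt (T - t) / Real.sqrt (2 * Real.pi) + 1 / 2) * he2
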